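/- For every z ∈ ℂ with Im z > 0 there exists a unique bounded linear operator S(z) : E → E_* with ‖S(z)‖ ≤ 1 such that S(z)Γu = Γ_*(A* − z)^{-1}(A − z)u for all u ∈ D(A). -/

import Mathlib

open scoped ComplexInnerProductSpace

noncomputable section

/-- A maximal dissipative operator on a complex Hilbert space `H`, together with the
(derivable) data of its resolvent on the open lower half-plane and the resolvent of its
adjoint on the open upper half-plane.  Here the inner product `⟪·,·⟫` is conjugate-linear
in the first variable, so that the paper's `⟨x, y⟩` corresponds to `⟪y, x⟫`. -/
structure MDO (H : Type*) [NormedAddCommGroup H] [InnerProductSpace ℂ H]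
    [CompleteSpace H] where
  /-- The underlying densely defined operator. -/
  A : H →ₗ.[ℂ] H
  dense_dom : Dense (A.domain : Set H)
  dissipative : ∀ u : A.domain, 0 ≤ (⟪(u : H), A u⟫).im
  /-- `R z` is the bounded inverse `(A - z)⁻¹`, for `Im z < 0`. -/
  R : ℂ → H →L[ℂ] H
  R_mem : ∀ z, z.im < 0 → ∀ h : H, R z h ∈ A.domain
  R_right : ∀ z (hz : z.im < 0) (h : H), A ⟨R z h, R_mem z hz h⟩ - z • R z h = h
  R_left : ∀ z, z.im < 0 → ∀ u : A.domain, R z (A u - z • (u : H)) = (u : H)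
  dense_dom_star : Dense (A.adjoint.domain : Set H)
  anti_dissipative_star : ∀ u : A.adjoint.domain, (⟪(u : H), A.adjoint u⟫).im ≤ 0
  /-- `Rs z` is the bounded inverse `(A* - z)⁻¹`, for `Im z > 0`. -/
  Rs : ℂ → H →L[ℂ] H
  Rs_mem : ∀ z, 0 < z.im → ∀ h : H, Rs z h ∈ A.adjoint.domain
  Rs_right : ∀ z (hz : 0 < z.im) (h : H),
    A.adjoint ⟨Rs z h, Rs_mem z hz h⟩ - z • Rs z h = h
  Rs_left : ∀ z, 0 < z.im → ∀ u : A.adjoint.domain,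
    Rs z (A.adjoint u - z • (u : H)) = (u : H)

/-- A maximal dissipative operator together with boundary operators `Γ`, `Γ_*` satisfying
the abstract Lagrange identities, and the bounded compositions `ΓR z = Γ ∘ (A - z)⁻¹`
(for `Im z < 0`) and `ΓsRs z = Γ_* ∘ (A* - z)⁻¹` (for `Im z > 0`). -/
structure StrausSetting (H E Es : Type*)
    [NormedAddCommGroup H] [InnerProductSpace ℂ H] [CompleteSpace H]
    [NormedAddCommGroup E] [InnerProductSpace ℂ E] [CompleteSpace E]
    [NormedAddCommGroup Es] [InnerProductSpace ℂ Es] [CompleteSpace Es]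
    extends MDO H where
  Γ : A.domain →ₗ[ℂ] E
  Γ_bdd : ∃ C : ℝ, ∀ u : A.domain, ‖Γ u‖ ≤ C * (‖(u : H)‖ + ‖A u‖)
  Γ_dense : DenseRange Γ
  lagrange : ∀ u v : A.domain,
    ⟪(v : H), A u⟫ - ⟪A v, (u : H)⟫ = Complex.I * ⟪Γ v, Γ u⟫
  Γs : A.adjoint.domain →ₗ[ℂ] Es
  Γs_bdd : ∃ C : ℝ, ∀ u : A.adjoint.domain,
    ‖Γs u‖ ≤ C * (‖(u : H)‖ + ‖A.adjoint u‖)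
  Γs_dense : DenseRange Γs
  lagrange_star : ∀ u v : A.adjoint.domain,
    ⟪(v : H), A.adjoint u⟫ - ⟪A.adjoint v, (u : H)⟫ = -Complex.I * ⟪Γs v, Γs u⟫
  /-- `ΓR z = Γ ∘ (A - z)⁻¹` as a bounded operator `H →L[ℂ] E`, for `Im z < 0`. -/
  ΓR : ℂ → H →L[ℂ] E
  ΓR_spec : ∀ z (hz : z.im < 0) (h : H), ΓR z h = Γ ⟨R z h, R_mem z hz h⟩
  /-- `ΓsRs z = Γ_* ∘ (A* - z)⁻¹` as a bounded operator `H →L[ℂ] Es`, for `Im z > 0`. -/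
  ΓsRs : ℂ → H →L[ℂ] Es
  ΓsRs_spec : ∀ z (hz : 0 < z.im) (h : H), ΓsRs z h = Γs ⟨Rs z h, Rs_mem z hz h⟩

namespace StrausSetting

variable {H E Es : Type*}
    [NormedAddCommGroup H] [InnerProductSpace ℂ H] [CompleteSpace H]
    [NormedAddCommGroup E] [InnerProductSpace ℂ E] [CompleteSpace E]
    [NormedAddCommGroup Es] [InnerProductSpace ℂ Es] [CompleteSpace Es]
    (M : StrausSetting H E Es) (z : ℂ) (hz : 0 < z.im)

/-- `u ↦ (A* - z)⁻¹(A - z)u` as an element of the domain of `A*`. -/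
def vel (u : M.A.domain) : M.A.adjoint.domain :=
  ⟨M.Rs z (M.A u - z • (u : H)), M.Rs_mem z hz _⟩

theorem vel_add (u u' : M.A.domain) :
    M.vel z hz (u + u') = M.vel z hz u + M.vel z hz u' := by
  apply Subtype.ext
  have h : M.A (u + u') - z • ((u + u' : M.A.domain) : H)
      = (M.A u - z • (u : H)) + (M.A u' - z • (u' : H)) := by
    rw [M.A.map_add, Submodule.coe_add, smul_add]; abel
  show M.Rs z _ = M.Rs z _ + M.Rs z _
  rw [h, map_add]

theorem vel_smul (c : ℂ) (u : M.A.domain) :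
    M.vel z hz (c • u) = c • M.vel z hz u := by
  apply Subtype.ext
  have h : M.A (c • u) - z • ((c • u : M.A.domain) : H)
      = c • (M.A u - z • (u : H)) := by
    rw [M.A.map_smul, Submodule.coe_smul, smul_sub, smul_comm]
  show M.Rs z _ = c • M.Rs z _
  rw [h, map_smul]

/-- `u ↦ Γ_*(A* - z)⁻¹(A - z)u` as a linear map. -/
def PhiL : M.A.domain →ₗ[ℂ] Es where
  toFun u := M.Γs (M.vel z hz u)
  map_add' u u' := by simp only [vel_add, map_add]
  map_smul' c u := by simp only [vel_smul, map_smul, RingHom.id_apply]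

theorem phiL_contraction (u : M.A.domain) : ‖M.PhiL z hz u‖ ≤ ‖M.Γ u‖ := by
  set v : M.A.adjoint.domain := M.vel z hz u with hv
  have hΦ : M.PhiL z hz u = M.Γs v := rfl
  rw [hΦ]
  have hveq : M.A.adjoint v - z • (v : H) = M.A u - z • (u : H) := M.Rs_right z hz _
  -- conjugate-symmetry facts
  have hcu : (⟪(M.A u : H), (u : H)⟫).im = -(⟪(u : H), M.A u⟫).im := by
    rw [← inner_conj_symm (M.A u) ((u : H)), Complex.conj_im]
  have hcv : (⟪(M.A.adjoint v : H), (v : H)⟫).im = -(⟪(v : H), M.A.adjoint v⟫).im := by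
    rw [← inner_conj_symm (M.A.adjoint v) ((v : H)), Complex.conj_im]
  -- (a): 2 Im⟪u, Au⟫ = ‖Γu‖²
  have h1 := M.lagrange u u
  rw [← inner_conj_symm (M.A u) ((u : H)), inner_self_eq_norm_sq_to_K] at h1
  have ha := congrArg Complex.im h1
  simp [← Complex.ofReal_pow] at ha
  -- (b): 2 Im⟪v, A*v⟫ = -‖Γs v‖²
  have h2 := M.lagrange_star v v
  rw [← inner_conj_symm (M.A.adjoint v) ((v : H)), inner_self_eq_norm_sq_to_K] at h2
  have hb := congrArg Complex.im h2
  simp [← Complex.ofReal_pow] at hb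
  -- formal adjoint
  have hfa := LinearPMap.adjoint_isFormalAdjoint M.dense_dom v u
  -- expansions
  have hAu : M.A u = (M.A.adjoint v - z • (v : H)) + z • (u : H) := by rw [hveq]; abel
  have h3 : ⟪(v : H), M.A u⟫ = ⟪(v : H), M.A.adjoint v⟫ - z * ((‖(v : H)‖ : ℂ)) ^ 2
      + z * ⟪(v : H), (u : H)⟫ := by
    rw [hAu, inner_add_right, inner_sub_right, inner_smul_right, inner_smul_right,
      inner_self_eq_norm_sq_to_K]
    norm_cast
  have hAv : M.A.adjoint v = (M.A u - z • (u : H)) + z • (v : H) := by rw [← hveq]; abel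
  have h4 : ⟪M.A.adjoint v, (u : H)⟫
      = (starRingEnd ℂ) ⟪(u : H), M.A u⟫ - (starRingEnd ℂ) z * ((‖(u : H)‖ : ℂ)) ^ 2
        + (starRingEnd ℂ) z * ⟪(v : H), (u : H)⟫ := by
    rw [hAv, inner_add_left, inner_sub_left, inner_smul_left, inner_smul_left,
      inner_self_eq_norm_sq_to_K, ← inner_conj_symm (M.A u) ((u : H))]
    norm_cast
  have hmain : (starRingEnd ℂ) ⟪(u : H), M.A u⟫ - (starRingEnd ℂ) z * ((‖(u : H)‖ : ℂ)) ^ 2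
        + (starRingEnd ℂ) z * ⟪(v : H), (u : H)⟫
      = ⟪(v : H), M.A.adjoint v⟫ - z * ((‖(v : H)‖ : ℂ)) ^ 2
        + z * ⟪(v : H), (u : H)⟫ := by
    rw [← h4, hfa, h3]
  have him := congrArg Complex.im hmain
  simp [← Complex.ofReal_pow, Complex.add_im, Complex.sub_im, Complex.mul_im,
    Complex.conj_im, Complex.conj_re] at him
  have hns : ‖(u : H) - (v : H)‖ ^ 2
      = ‖(u : H)‖ ^ 2 - 2 * (⟪(v : H), (u : H)⟫).re + ‖(v : H)‖ ^ 2 := by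
    have h5 := @norm_sub_sq ℂ _ _ _ _ ((u : H)) ((v : H))
    rw [inner_re_symm] at h5
    simpa using h5
  have hz2 : 0 ≤ z.im * ‖(u : H) - (v : H)‖ ^ 2 := mul_nonneg hz.le (sq_nonneg _)
  have hY : (⟪(v : H), M.A.adjoint v⟫).im
      = -(⟪(u : H), M.A u⟫).im + z.im * ‖(u : H) - (v : H)‖ ^ 2 := by
    rw [hns]
    linear_combination -him + hcu
  have hsq : ‖M.Γs v‖ ^ 2 ≤ ‖M.Γ u‖ ^ 2 := by linarith
  exact (pow_le_pow_iff_left₀ (norm_nonneg _) (norm_nonneg _) two_ne_zero).mp hsq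

end StrausSetting

/-- For every `z` with `Im z > 0` there is a unique bounded operator
`S(z) : E → E_*` with `‖S(z)‖ ≤ 1` such that `S(z)Γu = Γ_*(A* - z)⁻¹(A - z)u` for all
`u ∈ D(A)`. -/
theorem stmt4 {H E Es : Type*}
    [NormedAddCommGroup H] [InnerProductSpace ℂ H] [CompleteSpace H]
    [NormedAddCommGroup E] [InnerProductSpace ℂ E] [CompleteSpace E]
    [NormedAddCommGroup Es] [InnerProductSpace ℂ Es] [CompleteSpace Es]
    (M : StrausSetting H E Es)
    (z : ℂ) (hz : 0 < z.im) :
    ∃! S : E →L[ℂ] Es, ‖S‖ ≤ 1 ∧ ∀ u : M.A.domain,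
      S (M.Γ u) = M.Γs ⟨M.Rs z (M.A u - z • (u : H)), M.Rs_mem z hz _⟩ := by
  classical
  have key : ∀ u : M.A.domain, ‖M.PhiL z hz u‖ ≤ ‖M.Γ u‖ := M.phiL_contraction z hz
  have hker : ∀ u u' : M.A.domain, M.Γ u = M.Γ u' → M.PhiL z hz u = M.PhiL z hz u' := by
    intro u u' h
    have h2 := key (u - u')
    rw [map_sub, map_sub, h, sub_self, norm_zero] at h2
    rwa [norm_le_zero_iff, sub_eq_zero] at h2
  set p := LinearMap.range M.Γ with hp
  have pickex : ∀ x : p, ∃ u : M.A.domain, M.Γ u = (x : E) := fun x => LinearMap.mem_range.mp x.2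
  set pick : p → M.A.domain := fun x => (pickex x).choose with hpickdef
  have hpick : ∀ x : p, M.Γ (pick x) = (x : E) := fun x => (pickex x).choose_spec
  let T0 : p →ₗ[ℂ] Es :=
    { toFun := fun x => M.PhiL z hz (pick x)
      map_add' := fun x y => by
        show M.PhiL z hz (pick (x + y)) = M.PhiL z hz (pick x) + M.PhiL z hz (pick y)
        rw [← map_add]
        apply hker
        rw [map_add, hpick, hpick, hpick, Submodule.coe_add]
      map_smul' := fun c x => by
        simp only [RingHom.id_apply]
        rw [← map_smul]
        apply hker
        rw [map_smul, hpick, hpick, Submodule.coe_smul] }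
  have T0bound : ∀ x : p, ‖T0 x‖ ≤ 1 * ‖x‖ := by
    intro x
    have h1 := key (pick x)
    rw [hpick] at h1
    rw [one_mul]
    exact h1
  let T : p →L[ℂ] Es := T0.mkContinuous 1 T0bound
  let e : p →L[ℂ] E := p.subtypeL
  have hde : DenseRange e := by
    have hr : Set.range e = (p : Set E) := Subtype.range_val
    have hr2 : (p : Set E) = Set.range M.Γ := by
      ext x; simp [hp, LinearMap.mem_range, Set.mem_range]
    rw [DenseRange, hr, hr2]
    exact M.Γ_dense
  have hue : ∀ x : p, ‖x‖ ≤ (1 : NNReal) * ‖e x‖ := fun x => by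
    simp [e]
  refine ⟨T.extend e,
    ⟨?_, ?_⟩, ?_⟩
  · calc ‖T.extend e‖ ≤ (1 : NNReal) * ‖T‖ := T.opNorm_extend_le hde hue
    _ ≤ 1 := by
        rw [NNReal.coe_one, one_mul]
        exact T0.mkContinuous_norm_le zero_le_one T0bound
  · intro u
    have hmem : M.Γ u ∈ p := LinearMap.mem_range_self _ u
    have he : e ⟨M.Γ u, hmem⟩ = M.Γ u := rfl
    have := ContinuousLinearMap.extend_eq T hde
      (ContinuousLinearMap.isUniformEmbedding_of_bound e hue).isUniformInducing ⟨M.Γ u, hmem⟩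
    rw [he] at this
    rw [this]
    have hT : T ⟨M.Γ u, hmem⟩ = M.PhiL z hz u := by
      apply hker
      rw [hpick]
    rw [hT]
    rfl
  · intro S' hS'
    apply ContinuousLinearMap.coeFn_injective
    refine M.Γ_dense.equalizer S'.continuous
      (T.extend e).continuous ?_
    funext u
    simp only [Function.comp_apply]
    rw [hS'.2 u]
    have hmem : M.Γ u ∈ p := LinearMap.mem_range_self _ u
    have he : e ⟨M.Γ u, hmem⟩ = M.Γ u := rfl
    have h2 := ContinuousLinearMap.extend_eq T hde
      (ContinuousLinearMap.isUniformEmbedding_of_bound e hue).isUniformInducing ⟨M.Γ u, hmem⟩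
    rw [he] at h2
    rw [h2]
    have hT : T ⟨M.Γ u, hmem⟩ = M.PhiL z hz u := by
      apply hker
      rw [hpick]
    rw [hT]
    rfl

end
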